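/- Let H : ℂ × ℂ × ℂ → ℂ be a differentiable function of (x, y, t) and let F : ℂ × ℂ × ℂ × ℂ → ℂ be a differentiable function of (x, y, t, h) such that F Poisson-commutes with the extended Hamiltonian Ĥ = H + h, i.e. ∂F/∂x·∂H/∂y − ∂F/∂y·∂H/∂x + ∂F/∂t − ∂F/∂h·∂H/∂t = 0 identically on ℂ⁴. Fix λ ∈ ℂ and define G(x,y,t) := F(x, y, t, λ − H(x,y,t)). Then ∂G/∂x·∂H/∂y − ∂G/∂y·∂H/∂x + ∂G/∂t = 0 identically, i.e. G is a first integral of the non-autonomous Hamiltonian vector field of H. -/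

import Mathlib

/-- `∂F/∂x` for a function of `(x,y,t) ∈ ℂ³`. -/
noncomputable def d3x (F : ℂ × ℂ × ℂ → ℂ) (p : ℂ × ℂ × ℂ) : ℂ := fderiv ℂ F p (1, 0, 0)

/-- `∂F/∂y` for a function of `(x,y,t) ∈ ℂ³`. -/
noncomputable def d3y (F : ℂ × ℂ × ℂ → ℂ) (p : ℂ × ℂ × ℂ) : ℂ := fderiv ℂ F p (0, 1, 0)

/-- `∂F/∂t` for a function of `(x,y,t) ∈ ℂ³`. -/
noncomputable def d3t (F : ℂ × ℂ × ℂ → ℂ) (p : ℂ × ℂ × ℂ) : ℂ := fderiv ℂ F p (0, 0, 1)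

/-- `∂F/∂x` for a function of `(x,y,t,h) ∈ ℂ⁴`. -/
noncomputable def d4x (F : ℂ × ℂ × ℂ × ℂ → ℂ) (q : ℂ × ℂ × ℂ × ℂ) : ℂ :=
  fderiv ℂ F q (1, 0, 0, 0)

/-- `∂F/∂y` for a function of `(x,y,t,h) ∈ ℂ⁴`. -/
noncomputable def d4y (F : ℂ × ℂ × ℂ × ℂ → ℂ) (q : ℂ × ℂ × ℂ × ℂ) : ℂ :=
  fderiv ℂ F q (0, 1, 0, 0)

/-- `∂F/∂t` for a function of `(x,y,t,h) ∈ ℂ⁴`. -/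
noncomputable def d4t (F : ℂ × ℂ × ℂ × ℂ → ℂ) (q : ℂ × ℂ × ℂ × ℂ) : ℂ :=
  fderiv ℂ F q (0, 0, 1, 0)

/-- `∂F/∂h` for a function of `(x,y,t,h) ∈ ℂ⁴`. -/
noncomputable def d4h (F : ℂ × ℂ × ℂ × ℂ → ℂ) (q : ℂ × ℂ × ℂ × ℂ) : ℂ :=
  fderiv ℂ F q (0, 0, 0, 1)

/-- Chain rule for the restriction map `p ↦ (p.1, p.2.1, p.2.2, lam - H p)`. -/
lemma chain_key (H : ℂ × ℂ × ℂ → ℂ) (F : ℂ × ℂ × ℂ × ℂ → ℂ)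
    (hH : Differentiable ℂ H) (hF : Differentiable ℂ F) (lam : ℂ)
    (p : ℂ × ℂ × ℂ) (v : ℂ × ℂ × ℂ) :
    fderiv ℂ (fun p' => F (p'.1, p'.2.1, p'.2.2, lam - H p')) p v
      = fderiv ℂ F (p.1, p.2.1, p.2.2, lam - H p)
          (v.1, v.2.1, v.2.2, -(fderiv ℂ H p v)) := by
  have h1 : HasFDerivAt (fun p' : ℂ × ℂ × ℂ => p'.1)
      (ContinuousLinearMap.fst ℂ ℂ (ℂ × ℂ)) p := hasFDerivAt_fst
  have h2 : HasFDerivAt (fun p' : ℂ × ℂ × ℂ => p'.2.1)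
      ((ContinuousLinearMap.fst ℂ ℂ ℂ).comp (ContinuousLinearMap.snd ℂ ℂ (ℂ × ℂ))) p :=
    hasFDerivAt_fst.comp p hasFDerivAt_snd
  have h3 : HasFDerivAt (fun p' : ℂ × ℂ × ℂ => p'.2.2)
      ((ContinuousLinearMap.snd ℂ ℂ ℂ).comp (ContinuousLinearMap.snd ℂ ℂ (ℂ × ℂ))) p :=
    hasFDerivAt_snd.comp p hasFDerivAt_snd
  have h4 : HasFDerivAt (fun p' : ℂ × ℂ × ℂ => lam - H p') (-(fderiv ℂ H p)) p :=
    ((hH p).hasFDerivAt).const_sub lam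
  have hφ := h1.prodMk (h2.prodMk (h3.prodMk h4))
  have hG := ((hF _).hasFDerivAt).comp p hφ
  simp only [Function.comp_def] at hG
  rw [hG.fderiv]
  simp

lemma lin_split (L : (ℂ × ℂ × ℂ × ℂ) →L[ℂ] ℂ) (b c d a : ℂ) :
    L (b, c, d, -a) = L (b, c, d, 0) - a * L (0, 0, 0, 1) := by
  have h : ((b, c, d, -a) : ℂ × ℂ × ℂ × ℂ) = (b, c, d, 0) + (-a) • (0, 0, 0, 1) := by
    simp [Prod.ext_iff]
  rw [h, map_add, map_smul]
  ring_nf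

theorem restriction_is_first_integral_one_and_half_dof
    (H : ℂ × ℂ × ℂ → ℂ) (F : ℂ × ℂ × ℂ × ℂ → ℂ)
    (hH : Differentiable ℂ H) (hF : Differentiable ℂ F)
    (hcomm : ∀ q : ℂ × ℂ × ℂ × ℂ,
      d4x F q * d3y H (q.1, q.2.1, q.2.2.1) - d4y F q * d3x H (q.1, q.2.1, q.2.2.1)
        + d4t F q - d4h F q * d3t H (q.1, q.2.1, q.2.2.1) = 0)
    (lam : ℂ) :
    ∀ p : ℂ × ℂ × ℂ,
      d3x (fun p' => F (p'.1, p'.2.1, p'.2.2, lam - H p')) p * d3y H p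
        - d3y (fun p' => F (p'.1, p'.2.1, p'.2.2, lam - H p')) p * d3x H p
        + d3t (fun p' => F (p'.1, p'.2.1, p'.2.2, lam - H p')) p = 0 := by
  intro p
  have hq := hcomm (p.1, p.2.1, p.2.2, lam - H p)
  have hp : ((p.1, p.2.1, p.2.2) : ℂ × ℂ × ℂ) = p := rfl
  simp only [d4x, d4y, d4t, d4h, d3x, d3y, d3t, hp] at hq ⊢
  rw [chain_key H F hH hF lam p (1,0,0), chain_key H F hH hF lam p (0,1,0),
    chain_key H F hH hF lam p (0,0,1)]
  simp only [lin_split]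
  linear_combination hq
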